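/- Let (X, ℬ, μ, T) be an invertible measure-preserving system on a standard probability space such that T^n is rank one for every n ≥ 1 and T is rigid. Then the set of rank one transformations in the weak closure Wcl(T) of {T^n : n ∈ ℤ} in the group Aut(X, μ) (with the weak topology) contains a dense G_δ subset of Wcl(T). -/

import Mathlib

open MeasureTheory Filter Topology Set
open scoped ENNReal symmDiff

variable (X : Type*) [MeasurableSpace X]

/-- The group of invertible measure-preserving transformations of `(X, μ)`. -/
def AutM (μ : Measure X) : Type _ :=
  {T : X ≃ᵐ X // MeasurePreserving T μ μ}

/-- The weak topology on `Aut(X, μ)`, generated by the sets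
`{S : μ(S⁻¹A Δ T⁻¹A) < ε}` for `T ∈ Aut(X, μ)`, `A` measurable and `ε > 0`. -/
instance weakTop (μ : Measure X) : TopologicalSpace (AutM X μ) :=
  TopologicalSpace.generateFrom
    {U | ∃ (T : AutM X μ) (A : Set X) (ε : ℝ≥0∞), MeasurableSet A ∧ 0 < ε ∧
      U = {S : AutM X μ | μ (symmDiff (⇑S.1 ⁻¹' A) (⇑T.1 ⁻¹' A)) < ε}}

/-- `f` is a rank one transformation of `(X, μ)`: every finite measurable partition
is `ε`-refined by the partition into levels of a single Rokhlin tower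
`B, fB, ..., f^{n-1}B` together with the complement of the tower. -/
def IsRankOneMap (μ : Measure X) (f : X → X) : Prop :=
  ∀ P : Finset (Set X), (∀ p ∈ P, MeasurableSet p) → ∀ ε : ℝ≥0∞, 0 < ε →
    ∃ (B : Set X) (n : ℕ), MeasurableSet B ∧
      (∀ i < n, ∀ j < n, i ≠ j → Disjoint (f^[i] '' B) (f^[j] '' B)) ∧
      ∀ p ∈ P, ∃ I : Finset ℕ, (∀ i ∈ I, i < n) ∧
        μ (symmDiff p (⋃ i ∈ I, f^[i] '' B)) < ε

/-- `f` is rigid: `f^{n_k} → Id` weakly along some strictly increasing sequence. -/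
def IsRigidMap (μ : Measure X) (f : X → X) : Prop :=
  ∃ n : ℕ → ℕ, StrictMono n ∧ ∀ A : Set X, MeasurableSet A →
    Tendsto (fun k => μ (symmDiff (f^[n k] ⁻¹' A) A)) atTop (𝓝 0)

/-- Nonnegative powers of a measurable equivalence. -/
def mePowNat (e : X ≃ᵐ X) : ℕ → (X ≃ᵐ X)
  | 0 => MeasurableEquiv.refl X
  | n + 1 => (mePowNat e n).trans e

/-- Integer powers of a measurable equivalence. -/
def mePow (e : X ≃ᵐ X) : ℤ → (X ≃ᵐ X)
  | Int.ofNat n => mePowNat X e n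
  | Int.negSucc n => mePowNat X e.symm (n + 1)

/-- The weak closure `Wcl(T)` of the set of integer powers `{T^n : n ∈ ℤ}`. -/
def Wcl (μ : Measure X) (T : AutM X μ) : Set (AutM X μ) :=
  closure {S : AutM X μ | ∃ n : ℤ, S.1 = mePow X T.1 n}

section Aux

variable {X}

lemma coe_mePowNat (e : X ≃ᵐ X) : ∀ n : ℕ, ⇑(mePowNat X e n) = (⇑e)^[n]
  | 0 => rfl
  | n + 1 => by
    show ⇑((mePowNat X e n).trans e) = _
    rw [Function.iterate_succ']
    funext x
    simp [MeasurableEquiv.trans_apply, coe_mePowNat e n]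

variable {μ : Measure X}

lemma AutM.mp_pow (S : AutM X μ) (i : ℕ) : MeasurePreserving ⇑(mePowNat X S.1 i) μ μ := by
  rw [coe_mePowNat]; exact S.2.iterate i

lemma AutM.mp_pow_symm (S : AutM X μ) (i : ℕ) :
    MeasurePreserving ⇑(mePowNat X S.1 i).symm μ μ :=
  (AutM.mp_pow S i).symm _

lemma iter_image_eq (S : AutM X μ) (i : ℕ) (C : Set X) :
    (⇑S.1)^[i] '' C = ⇑(mePowNat X S.1 i).symm ⁻¹' C := by
  rw [← coe_mePowNat, MeasurableEquiv.image_eq_preimage_symm]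

lemma measurable_iter_image (S : AutM X μ) (i : ℕ) {C : Set X} (hC : MeasurableSet C) :
    MeasurableSet ((⇑S.1)^[i] '' C) := by
  rw [iter_image_eq]; exact hC.preimage (mePowNat X S.1 i).symm.measurable

lemma measure_iter_image (S : AutM X μ) (i : ℕ) {C : Set X} (hC : MeasurableSet C) :
    μ ((⇑S.1)^[i] '' C) = μ C := by
  rw [iter_image_eq]; exact (AutM.mp_pow_symm S i).measure_preimage hC.nullMeasurableSet

lemma measure_iter_image_symmDiff (S : AutM X μ) (i : ℕ) {s t : Set X}
    (hs : MeasurableSet s) (ht : MeasurableSet t) :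
    μ (((⇑S.1)^[i] '' s) ∆ ((⇑S.1)^[i] '' t)) = μ (s ∆ t) := by
  rw [← Set.image_symmDiff (S.1.injective.iterate i), measure_iter_image S i (hs.symmDiff ht)]

lemma measure_image_eq (S : AutM X μ) {C : Set X} (hC : MeasurableSet C) :
    μ (⇑S.1 '' C) = μ C := by
  simpa using measure_iter_image S 1 hC

lemma measurable_image (S : AutM X μ) {C : Set X} (hC : MeasurableSet C) :
    MeasurableSet (⇑S.1 '' C) := by
  simpa using measurable_iter_image S 1 hC

/-- Key estimate: distance between images equals distance between preimages of the image. -/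
lemma image_symmDiff_eq (S S' : AutM X μ) {C : Set X} (hC : MeasurableSet C) :
    μ ((⇑S'.1 '' C) ∆ (⇑S.1 '' C)) =
      μ ((⇑S'.1 ⁻¹' (⇑S.1 '' C)) ∆ (⇑S.1 ⁻¹' (⇑S.1 '' C))) := by
  have h1 : ⇑S.1 '' C = ⇑S'.1 '' (⇑S'.1 ⁻¹' (⇑S.1 '' C)) :=
    (Set.image_preimage_eq _ S'.1.surjective).symm
  have h2 : ⇑S.1 ⁻¹' (⇑S.1 '' C) = C := Set.preimage_image_eq _ S.1.injective
  calc μ ((⇑S'.1 '' C) ∆ (⇑S.1 '' C))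
      = μ (⇑S'.1 '' (C ∆ (⇑S'.1 ⁻¹' (⇑S.1 '' C)))) := by
        rw [Set.image_symmDiff S'.1.injective, ← h1]
    _ = μ (C ∆ (⇑S'.1 ⁻¹' (⇑S.1 '' C))) :=
        measure_image_eq S' (hC.symmDiff ((measurable_image S hC).preimage S'.1.measurable))
    _ = μ ((⇑S'.1 ⁻¹' (⇑S.1 '' C)) ∆ (⇑S.1 ⁻¹' (⇑S.1 '' C))) := by
        rw [h2, symmDiff_comm]

lemma iter_image_symmDiff_le (S S' : AutM X μ) {B : Set X} (hB : MeasurableSet B) :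
    ∀ d : ℕ, μ (((⇑S'.1)^[d] '' B) ∆ ((⇑S.1)^[d] '' B)) ≤
      ∑ j ∈ Finset.Icc 1 d,
        μ ((⇑S'.1 ⁻¹' ((⇑S.1)^[j] '' B)) ∆ (⇑S.1 ⁻¹' ((⇑S.1)^[j] '' B)))
  | 0 => by simp
  | d + 1 => by
    have hfd : MeasurableSet ((⇑S.1)^[d] '' B) := measurable_iter_image S d hB
    have hgd : MeasurableSet ((⇑S'.1)^[d] '' B) := measurable_iter_image S' d hB
    have e1 : (⇑S'.1)^[d+1] '' B = ⇑S'.1 '' ((⇑S'.1)^[d] '' B) := by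
      rw [Function.iterate_succ', Set.image_comp]
    have e2 : (⇑S.1)^[d+1] '' B = ⇑S.1 '' ((⇑S.1)^[d] '' B) := by
      rw [Function.iterate_succ', Set.image_comp]
    calc μ (((⇑S'.1)^[d+1] '' B) ∆ ((⇑S.1)^[d+1] '' B))
        ≤ μ ((⇑S'.1 '' ((⇑S'.1)^[d] '' B)) ∆ (⇑S'.1 '' ((⇑S.1)^[d] '' B))) +
          μ ((⇑S'.1 '' ((⇑S.1)^[d] '' B)) ∆ (⇑S.1 '' ((⇑S.1)^[d] '' B))) := by
          rw [e1, e2]; exact measure_symmDiff_le _ _ _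
      _ ≤ (∑ j ∈ Finset.Icc 1 d,
            μ ((⇑S'.1 ⁻¹' ((⇑S.1)^[j] '' B)) ∆ (⇑S.1 ⁻¹' ((⇑S.1)^[j] '' B)))) +
          μ ((⇑S'.1 ⁻¹' ((⇑S.1)^[d+1] '' B)) ∆ (⇑S.1 ⁻¹' ((⇑S.1)^[d+1] '' B))) := by
          refine add_le_add ?_ ?_
          · calc μ ((⇑S'.1 '' ((⇑S'.1)^[d] '' B)) ∆ (⇑S'.1 '' ((⇑S.1)^[d] '' B)))
                = μ (((⇑S'.1)^[d] '' B) ∆ ((⇑S.1)^[d] '' B)) := by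
                  simpa using measure_iter_image_symmDiff S' 1 hgd hfd
              _ ≤ _ := iter_image_symmDiff_le S S' hB d
          · rw [image_symmDiff_eq S S' hfd, ← e2, symmDiff_comm]
      _ = ∑ j ∈ Finset.Icc 1 (d+1),
            μ ((⇑S'.1 ⁻¹' ((⇑S.1)^[j] '' B)) ∆ (⇑S.1 ⁻¹' ((⇑S.1)^[j] '' B))) := by
          rw [Finset.sum_Icc_succ_top (by omega)]

end Aux

section Aux2

variable {X}

lemma coe_mePow_add_one (e : X ≃ᵐ X) (j : ℤ) :
    ⇑(mePow X e (j + 1)) = ⇑e ∘ ⇑(mePow X e j) := by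
  match j with
  | Int.ofNat a =>
    have h : (Int.ofNat a) + 1 = Int.ofNat (a + 1) := rfl
    rw [h]
    show ⇑(mePowNat X e (a+1)) = ⇑e ∘ ⇑(mePowNat X e a)
    rw [coe_mePowNat, coe_mePowNat, Function.iterate_succ']
  | Int.negSucc 0 =>
    have h : (Int.negSucc 0) + 1 = Int.ofNat 0 := rfl
    rw [h]
    show ⇑(mePowNat X e 0) = ⇑e ∘ ⇑(mePowNat X e.symm 1)
    funext x
    simp [coe_mePowNat]
  | Int.negSucc (a+1) =>
    have h : (Int.negSucc (a+1)) + 1 = Int.negSucc a := by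
      rw [Int.negSucc_eq, Int.negSucc_eq]; push_cast; ring
    rw [h]
    show ⇑(mePowNat X e.symm (a+1)) = ⇑e ∘ ⇑(mePowNat X e.symm (a+2))
    funext x
    show ⇑(mePowNat X e.symm (a+1)) x = e (((mePowNat X e.symm (a+1)).trans e.symm) x)
    simp [MeasurableEquiv.trans_apply]

lemma coe_mePow_add_nat (e : X ≃ᵐ X) (j : ℤ) :
    ∀ N : ℕ, ⇑(mePow X e (j + N)) = (⇑e)^[N] ∘ ⇑(mePow X e j)
  | 0 => by simp
  | N + 1 => by
    have h : j + ((N : ℤ) + 1) = (j + N) + 1 := by ring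
    push_cast
    rw [h, coe_mePow_add_one, coe_mePow_add_nat e j N, Function.iterate_succ']
    rfl

variable {μ : Measure X}

lemma mp_mePow (T : AutM X μ) : ∀ m : ℤ, MeasurePreserving ⇑(mePow X T.1 m) μ μ
  | Int.ofNat n => by
    show MeasurePreserving ⇑(mePowNat X T.1 n) μ μ
    rw [coe_mePowNat]; exact T.2.iterate n
  | Int.negSucc n => by
    show MeasurePreserving ⇑(mePowNat X T.1.symm (n+1)) μ μ
    rw [coe_mePowNat]; exact (T.2.symm T.1).iterate (n+1)

lemma exists_dense_family (μ : Measure X) [IsProbabilityMeasure μ]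
    [MeasurableSpace.CountablyGenerated X] :
    ∃ A : ℕ → Set X, (∀ j, MeasurableSet (A j)) ∧
      ∀ s, MeasurableSet s → ∀ ε : ℝ≥0∞, 0 < ε → ∃ j, μ (s ∆ A j) < ε := by
  obtain ⟨𝒜, hcount, hdense⟩ := MeasureTheory.exists_countable_measureDense (μ := μ)
  obtain ⟨A, hA⟩ := Set.Countable.exists_eq_range hcount hdense.nonempty
  refine ⟨A, fun j => hdense.measurable _ (hA ▸ Set.mem_range_self j), ?_⟩
  intro s hs ε hε
  set r : ℝ≥0∞ := min 1 ε with hr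
  have hrtop : r ≠ ⊤ := ne_top_of_le_ne_top ENNReal.one_ne_top (min_le_left _ _)
  have hr0 : 0 < r := lt_min one_pos hε
  have hr0' : 0 < r.toReal := ENNReal.toReal_pos hr0.ne' hrtop
  obtain ⟨t, ht, happrox⟩ := hdense.approx s hs (measure_ne_top μ s) r.toReal hr0'
  rw [hA] at ht
  obtain ⟨j, rfl⟩ := ht
  exact ⟨j, lt_of_lt_of_le (by rwa [ENNReal.ofReal_toReal hrtop] at happrox)
    (min_le_right 1 ε)⟩

end Aux2

/-- The open approximation sets. -/
def GSet (μ : Measure X) (A : ℕ → Set X) (k : ℕ) : Set (AutM X μ) :=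
  {S | ∃ (B : Set X) (n : ℕ), MeasurableSet B ∧
    (∀ i < n, ∀ j < n, i ≠ j → Disjoint ((⇑S.1)^[i] '' B) ((⇑S.1)^[j] '' B)) ∧
    ∀ j ≤ k, ∃ I : Finset ℕ, (∀ i ∈ I, i < n) ∧
      μ ((A j) ∆ (⋃ i ∈ I, (⇑S.1)^[i] '' B)) < ((k : ℝ≥0∞) + 1)⁻¹}

section Aux3

variable {X}

lemma biUnion_symmDiff_subset {I : Finset ℕ} (s t : ℕ → Set X) :
    ((⋃ i ∈ I, s i) ∆ (⋃ i ∈ I, t i)) ⊆ ⋃ i ∈ I, ((s i) ∆ (t i)) := by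
  intro x hx
  rw [Set.mem_symmDiff] at hx
  simp only [Set.mem_iUnion, exists_prop] at *
  rcases hx with ⟨⟨i, hi, hxi⟩, hx2⟩ | ⟨⟨i, hi, hxi⟩, hx2⟩
  · exact ⟨i, hi, Set.mem_symmDiff.2 (Or.inl ⟨hxi, fun h => hx2 ⟨i, hi, h⟩⟩)⟩
  · exact ⟨i, hi, Set.mem_symmDiff.2 (Or.inr ⟨hxi, fun h => hx2 ⟨i, hi, h⟩⟩)⟩

lemma disjoint_iter_image {g : X → X} (hg : Function.Injective g) {C : Set X} {d : ℕ}
    (hd : Disjoint C (g^[d] '' C)) (i : ℕ) :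
    Disjoint (g^[i] '' C) (g^[i + d] '' C) := by
  rw [Function.iterate_add, Set.image_comp]
  exact (Set.disjoint_image_iff (hg.iterate i)).2 hd

end Aux3

lemma isOpen_GSet (μ : Measure X) [IsProbabilityMeasure μ] (A : ℕ → Set X)
    (hA : ∀ j, MeasurableSet (A j)) (k : ℕ) : IsOpen (GSet X μ A k) := by
  rw [isOpen_iff_forall_mem_open]
  rintro S ⟨B, n, hB, hdisj, happ⟩
  set η : ℝ≥0∞ := ((k : ℝ≥0∞) + 1)⁻¹ with hη
  have hη_ne_top : η ≠ ⊤ := by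
    rw [hη, Ne, ENNReal.inv_eq_top]
    simp
  have happ' : ∀ j : ℕ, ∃ I : Finset ℕ, (∀ i ∈ I, i < n) ∧
      (j ≤ k → μ ((A j) ∆ (⋃ i ∈ I, (⇑S.1)^[i] '' B)) < η) := by
    intro j
    by_cases hj : j ≤ k
    · obtain ⟨I, h1, h2⟩ := happ j hj; exact ⟨I, h1, fun _ => h2⟩
    · exact ⟨∅, by simp, fun h => absurd h hj⟩
  choose I hIlt hIle using happ'
  set γ : ℝ≥0∞ := (Finset.range (k+1)).inf' Finset.nonempty_range_add_one
      (fun j => η - μ ((A j) ∆ (⋃ i ∈ I j, (⇑S.1)^[i] '' B))) with hγ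
  have hγ_pos : 0 < γ := by
    rw [hγ, Finset.lt_inf'_iff]
    intro j hj
    exact tsub_pos_of_lt (hIle j (Nat.lt_succ_iff.1 (Finset.mem_range.1 hj)))
  have hγ_le : γ ≤ η :=
    le_trans (Finset.inf'_le _ (Finset.self_mem_range_succ k)) tsub_le_self
  have hγ_ne_top : γ ≠ ⊤ := ne_top_of_le_ne_top hη_ne_top hγ_le
  set K : ℝ≥0∞ := (n:ℝ≥0∞)^3 + (n:ℝ≥0∞)^2 + 1 with hK
  have hK0 : K ≠ 0 := by
    rw [hK]
    exact (lt_of_lt_of_le zero_lt_one le_add_self).ne'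
  have hKtop : K ≠ ⊤ :=
    ENNReal.add_ne_top.2 ⟨ENNReal.add_ne_top.2
      ⟨ENNReal.pow_ne_top (ENNReal.natCast_ne_top n),
       ENNReal.pow_ne_top (ENNReal.natCast_ne_top n)⟩, ENNReal.one_ne_top⟩
  set δ : ℝ≥0∞ := γ / 2 / K with hδ
  have hδ_pos : 0 < δ :=
    ENNReal.div_pos (ENNReal.div_pos hγ_pos.ne' ENNReal.ofNat_ne_top).ne' hKtop
  have hKδ : K * δ = γ / 2 := ENNReal.mul_div_cancel hK0 hKtop
  refine ⟨⋂ d ∈ Finset.Icc 1 (n-1),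
      {S' : AutM X μ | μ ((⇑S'.1 ⁻¹' ((⇑S.1)^[d] '' B)) ∆ (⇑S.1 ⁻¹' ((⇑S.1)^[d] '' B))) < δ},
      ?_, ?_, ?_⟩
  · -- subset of GSet
    intro S' hS'
    simp only [Set.mem_iInter, Set.mem_setOf_eq] at hS'
    set B' : Set X := B \ ⋃ d ∈ Finset.Icc 1 (n-1), (⇑S'.1)^[d] '' B with hB'def
    have hB'meas : MeasurableSet B' :=
      hB.diff (Finset.measurableSet_biUnion _ fun d _ => measurable_iter_image S' d hB)
    have hB'sub : B' ⊆ B := Set.diff_subset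
    have he : ∀ d < n, μ (((⇑S'.1)^[d] '' B) ∆ ((⇑S.1)^[d] '' B)) ≤ n * δ := by
      intro d hd
      refine le_trans (iter_image_symmDiff_le S S' hB d) ?_
      calc ∑ j ∈ Finset.Icc 1 d,
            μ ((⇑S'.1 ⁻¹' ((⇑S.1)^[j] '' B)) ∆ (⇑S.1 ⁻¹' ((⇑S.1)^[j] '' B)))
          ≤ ∑ _j ∈ Finset.Icc 1 d, δ := Finset.sum_le_sum fun j hj => by
            have hj' := Finset.mem_Icc.1 hj
            exact (hS' j (Finset.mem_Icc.2 ⟨hj'.1, by omega⟩)).le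
        _ = (d : ℝ≥0∞) * δ := by
            rw [Finset.sum_const, nsmul_eq_mul]; norm_num [Nat.card_Icc]
        _ ≤ (n : ℝ≥0∞) * δ := by gcongr <;> exact_mod_cast hd.le
    have hBB' : μ (B \ B') ≤ (n:ℝ≥0∞) * ((n:ℝ≥0∞) * δ) := by
      have hrw : B \ B' = ⋃ d ∈ Finset.Icc 1 (n-1), (B ∩ ((⇑S'.1)^[d] '' B)) := by
        rw [hB'def, Set.diff_diff_right_self, Set.inter_iUnion₂]
      rw [hrw]
      refine le_trans (measure_biUnion_finset_le _ _) ?_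
      have hterm : ∀ d ∈ Finset.Icc 1 (n-1),
          μ (B ∩ ((⇑S'.1)^[d] '' B)) ≤ (n:ℝ≥0∞) * δ := by
        intro d hd
        rw [Finset.mem_Icc] at hd
        have hdn : d < n := by omega
        have hdisj0 : Disjoint B ((⇑S.1)^[d] '' B) := by
          have h0 := hdisj 0 (by omega) d hdn (by omega)
          simpa using h0
        have hsub2 : B ∩ ((⇑S'.1)^[d] '' B) ⊆ ((⇑S'.1)^[d] '' B) ∆ ((⇑S.1)^[d] '' B) := by
          rintro x ⟨hx1, hx2⟩
          exact Set.mem_symmDiff.2 (Or.inl ⟨hx2, fun h => (Set.disjoint_left.1 hdisj0) hx1 h⟩)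
        exact le_trans (measure_mono hsub2) (he d hdn)
      calc ∑ d ∈ Finset.Icc 1 (n-1), μ (B ∩ ((⇑S'.1)^[d] '' B))
          ≤ ∑ _d ∈ Finset.Icc 1 (n-1), ((n:ℝ≥0∞) * δ) := Finset.sum_le_sum hterm
        _ = ((n - 1 : ℕ) : ℝ≥0∞) * ((n:ℝ≥0∞) * δ) := by
            rw [Finset.sum_const, nsmul_eq_mul]; norm_num [Nat.card_Icc]
        _ ≤ (n:ℝ≥0∞) * ((n:ℝ≥0∞) * δ) := by gcongr <;> exact_mod_cast Nat.sub_le n 1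
    have hBi : ∀ i < n,
        μ (((⇑S'.1)^[i] '' B') ∆ ((⇑S.1)^[i] '' B)) ≤ (n:ℝ≥0∞) * ((n:ℝ≥0∞) * δ) + n * δ := by
      intro i hi
      refine le_trans (measure_symmDiff_le _ ((⇑S'.1)^[i] '' B) _) ?_
      refine add_le_add ?_ (he i hi)
      have heq : μ (((⇑S'.1)^[i] '' B') ∆ ((⇑S'.1)^[i] '' B)) = μ (B' ∆ B) :=
        measure_iter_image_symmDiff S' i hB'meas hB
      rw [heq, symmDiff_of_le hB'sub]
      exact hBB'
    have hB'disj : ∀ d ∈ Finset.Icc 1 (n-1), Disjoint B' ((⇑S'.1)^[d] '' B') := by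
      intro d hd
      refine Set.disjoint_left.2 fun x hx1 hx2 => ?_
      exact hx1.2 (Set.mem_biUnion hd (Set.image_mono hB'sub hx2))
    have htower : ∀ i < n, ∀ j < n, i ≠ j →
        Disjoint ((⇑S'.1)^[i] '' B') ((⇑S'.1)^[j] '' B') := by
      have main : ∀ i j, i < n → j < n → i < j →
          Disjoint ((⇑S'.1)^[i] '' B') ((⇑S'.1)^[j] '' B') := by
        intro i j hi hj hij
        have hd : (j - i) ∈ Finset.Icc 1 (n-1) := Finset.mem_Icc.2 (by omega)
        have hdij := disjoint_iter_image S'.1.injective (hB'disj _ hd) i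
        rwa [show i + (j - i) = j from by omega] at hdij
      intro i hi j hj hne
      rcases Nat.lt_or_ge i j with h | h
      · exact main i j hi hj h
      · exact (main j i hj hi (by omega)).symm
    refine ⟨B', n, hB'meas, htower, ?_⟩
    intro j hj
    refine ⟨I j, hIlt j, ?_⟩
    have hcard : ((I j).card : ℝ≥0∞) ≤ (n : ℝ≥0∞) := by
      have := le_trans (Finset.card_le_card fun i hi => Finset.mem_range.2 (hIlt j i hi))
        (le_of_eq (Finset.card_range n))
      exact_mod_cast this
    have hstep : μ ((⋃ i ∈ I j, (⇑S.1)^[i] '' B) ∆ (⋃ i ∈ I j, (⇑S'.1)^[i] '' B')) ≤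
        (n:ℝ≥0∞) * ((n:ℝ≥0∞) * ((n:ℝ≥0∞) * δ) + n * δ) := by
      refine le_trans (measure_mono (biUnion_symmDiff_subset
        (fun i => (⇑S.1)^[i] '' B) (fun i => (⇑S'.1)^[i] '' B'))) ?_
      refine le_trans (measure_biUnion_finset_le _ _) ?_
      calc ∑ i ∈ I j, μ (((⇑S.1)^[i] '' B) ∆ ((⇑S'.1)^[i] '' B'))
          ≤ ∑ _i ∈ I j, ((n:ℝ≥0∞) * ((n:ℝ≥0∞) * δ) + n * δ) :=
            Finset.sum_le_sum fun i hi => by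
              rw [symmDiff_comm]; exact hBi i (hIlt j i hi)
        _ = ((I j).card : ℝ≥0∞) * ((n:ℝ≥0∞) * ((n:ℝ≥0∞) * δ) + n * δ) := by
            rw [Finset.sum_const, nsmul_eq_mul]
        _ ≤ (n:ℝ≥0∞) * ((n:ℝ≥0∞) * ((n:ℝ≥0∞) * δ) + n * δ) := by gcongr
    have hKbound : (n:ℝ≥0∞) * ((n:ℝ≥0∞) * ((n:ℝ≥0∞) * δ) + n * δ) ≤ K * δ := by
      rw [hK]
      calc (n:ℝ≥0∞) * ((n:ℝ≥0∞) * ((n:ℝ≥0∞) * δ) + n * δ)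
          = ((n:ℝ≥0∞)^3 + (n:ℝ≥0∞)^2) * δ := by ring
        _ ≤ ((n:ℝ≥0∞)^3 + (n:ℝ≥0∞)^2 + 1) * δ :=
            mul_le_mul_left le_self_add δ
    have hγj : γ ≤ η - μ ((A j) ∆ (⋃ i ∈ I j, (⇑S.1)^[i] '' B)) :=
      Finset.inf'_le _ (Finset.mem_range.2 (by omega))
    have hcj : μ ((A j) ∆ (⋃ i ∈ I j, (⇑S.1)^[i] '' B)) < η := hIle j hj
    calc μ ((A j) ∆ (⋃ i ∈ I j, (⇑S'.1)^[i] '' B'))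
        ≤ μ ((A j) ∆ (⋃ i ∈ I j, (⇑S.1)^[i] '' B)) +
          μ ((⋃ i ∈ I j, (⇑S.1)^[i] '' B) ∆ (⋃ i ∈ I j, (⇑S'.1)^[i] '' B')) :=
          measure_symmDiff_le _ _ _
      _ ≤ μ ((A j) ∆ (⋃ i ∈ I j, (⇑S.1)^[i] '' B)) + K * δ :=
          add_le_add_right (hstep.trans hKbound) _
      _ = μ ((A j) ∆ (⋃ i ∈ I j, (⇑S.1)^[i] '' B)) + γ / 2 := by rw [hKδ]
      _ < μ ((A j) ∆ (⋃ i ∈ I j, (⇑S.1)^[i] '' B)) + γ :=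
          ENNReal.add_lt_add_left (measure_ne_top μ _)
            (ENNReal.half_lt_self hγ_pos.ne' hγ_ne_top)
      _ ≤ μ ((A j) ∆ (⋃ i ∈ I j, (⇑S.1)^[i] '' B)) +
          (η - μ ((A j) ∆ (⋃ i ∈ I j, (⇑S.1)^[i] '' B))) := add_le_add_right hγj _
      _ = η := add_tsub_cancel_of_le hcj.le
  · -- open
    refine isOpen_biInter_finset fun d _ => ?_
    exact TopologicalSpace.isOpen_generateFrom_of_mem
      ⟨S, (⇑S.1)^[d] '' B, δ, measurable_iter_image S d hB, hδ_pos, rfl⟩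
  · -- membership
    simp only [Set.mem_iInter, Set.mem_setOf_eq]
    intro d _
    rw [symmDiff_self]
    simpa using hδ_pos

section Aux4

variable {X}

lemma pow_mem_GSet (μ : Measure X) [IsProbabilityMeasure μ] (A : ℕ → Set X)
    (hA : ∀ j, MeasurableSet (A j)) (k : ℕ) {S : AutM X μ} {f : X → X}
    (hf : ⇑S.1 = f) (hrank : IsRankOneMap X μ f) : S ∈ GSet X μ A k := by
  classical
  have hε : (0:ℝ≥0∞) < ((k:ℝ≥0∞)+1)⁻¹ := by
    rw [ENNReal.inv_pos]
    exact ENNReal.add_ne_top.2 ⟨ENNReal.natCast_ne_top k, ENNReal.one_ne_top⟩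
  obtain ⟨B, n, hB, hdisj, happ⟩ := hrank ((Finset.range (k+1)).image A)
    (by intro p hp; obtain ⟨j, _, rfl⟩ := Finset.mem_image.1 hp; exact hA j) _ hε
  refine ⟨B, n, hB, by rw [hf]; exact hdisj, ?_⟩
  intro j hj
  obtain ⟨I, h1, h2⟩ := happ (A j)
    (Finset.mem_image_of_mem A (Finset.mem_range.2 (by omega)))
  exact ⟨I, h1, by rw [hf]; exact h2⟩

lemma isRankOne_of_mem_GSet (μ : Measure X) [IsProbabilityMeasure μ] (A : ℕ → Set X)
    (hAd : ∀ s, MeasurableSet s → ∀ ε : ℝ≥0∞, 0 < ε → ∃ j, μ (s ∆ A j) < ε)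
    {S : AutM X μ} (hS : ∀ k, S ∈ GSet X μ A k) : IsRankOneMap X μ ⇑S.1 := by
  intro P hP ε hε
  set ε' : ℝ≥0∞ := min ε 1 with hε'
  have hε'top : ε' ≠ ⊤ := ne_top_of_le_ne_top ENNReal.one_ne_top (min_le_right _ _)
  have hε'0 : 0 < ε' := lt_min hε one_pos
  have hhalf0 : 0 < ε' / 2 := ENNReal.div_pos hε'0.ne' ENNReal.ofNat_ne_top
  have hch : ∀ p : Set X, ∃ j : ℕ, p ∈ P → μ (p ∆ A j) < ε' / 2 := by
    intro p
    by_cases hp : p ∈ P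
    · obtain ⟨j, hj⟩ := hAd p (hP p hp) (ε'/2) hhalf0
      exact ⟨j, fun _ => hj⟩
    · exact ⟨0, fun h => absurd h hp⟩
  choose jdx hjdx using hch
  obtain ⟨n₀, hn₀⟩ := ENNReal.exists_inv_nat_lt hhalf0.ne'
  set k := max n₀ (P.sup jdx) with hk
  obtain ⟨B, n, hB, hdisj, happ⟩ := hS k
  refine ⟨B, n, hB, hdisj, ?_⟩
  intro p hp
  obtain ⟨I, h1, h2⟩ := happ (jdx p) (le_max_of_le_right (Finset.le_sup hp))
  refine ⟨I, h1, ?_⟩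
  have hkinv : ((k:ℝ≥0∞)+1)⁻¹ < ε' / 2 := by
    refine lt_of_le_of_lt (ENNReal.inv_le_inv.2 ?_) hn₀
    exact_mod_cast Nat.le_succ_of_le (le_max_left n₀ (P.sup jdx))
  calc μ (p ∆ (⋃ i ∈ I, (⇑S.1)^[i] '' B))
      ≤ μ (p ∆ A (jdx p)) + μ ((A (jdx p)) ∆ (⋃ i ∈ I, (⇑S.1)^[i] '' B)) :=
        measure_symmDiff_le _ _ _
    _ < ε' / 2 + ε' / 2 := ENNReal.add_lt_add (hjdx p hp) (h2.trans hkinv)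
    _ = ε' := ENNReal.add_halves ε'
    _ ≤ ε := min_le_left _ _

lemma powers_subset_closure_posPow (μ : Measure X) [IsProbabilityMeasure μ] (T : AutM X μ)
    (hrig : IsRigidMap X μ ⇑T.1) :
    {S : AutM X μ | ∃ m : ℤ, S.1 = mePow X T.1 m} ⊆
      closure {S : AutM X μ | ∃ p : ℕ, 0 < p ∧ S.1 = mePow X T.1 (p : ℤ)} := by
  obtain ⟨nseq, hmono, hconv⟩ := hrig
  rintro S ⟨m, hm⟩
  set P : ℤ → AutM X μ := fun r => ⟨mePow X T.1 r, mp_mePow T r⟩ with hPdef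
  have hSP : S = P m := Subtype.ext hm
  set k₀ : ℕ := (1 - m).toNat with hk₀
  set u : ℕ → AutM X μ := fun k => P (m + (nseq (k + k₀) : ℤ)) with hu
  have hpos : ∀ k, 1 ≤ m + (nseq (k + k₀) : ℤ) := by
    intro k
    have h1 : (k₀ : ℤ) ≤ (nseq (k + k₀) : ℤ) := by
      exact_mod_cast le_trans (Nat.le_add_left k₀ k) hmono.le_apply
    have h2 : 1 - m ≤ (k₀ : ℤ) := Int.self_le_toNat _
    omega
  have humem : ∀ k, u k ∈ {S : AutM X μ | ∃ p : ℕ, 0 < p ∧ S.1 = mePow X T.1 (p:ℤ)} := by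
    intro k
    have htn : ((m + (nseq (k + k₀) : ℤ)).toNat : ℤ) = m + (nseq (k + k₀) : ℤ) :=
      Int.toNat_of_nonneg (by have := hpos k; omega)
    refine ⟨(m + (nseq (k + k₀) : ℤ)).toNat, by have := hpos k; omega, ?_⟩
    show mePow X T.1 (m + (nseq (k + k₀) : ℤ)) = mePow X T.1 _
    rw [htn]
  have hten : Tendsto u atTop (𝓝 (P m)) := by
    refine TopologicalSpace.tendsto_nhds_generateFrom_iff.2 ?_
    rintro s ⟨T', Aset, ε, hAm, hε, rfl⟩ hmem
    simp only [Set.mem_setOf_eq] at hmem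
    set c := μ ((⇑(P m).1 ⁻¹' Aset) ∆ (⇑T'.1 ⁻¹' Aset)) with hc
    have hctop : c ≠ ⊤ := measure_ne_top μ _
    have hgap : 0 < ε - c := tsub_pos_of_lt hmem
    have htend0 : Tendsto
        (fun k => μ (((⇑T.1)^[nseq (k + k₀)] ⁻¹' Aset) ∆ Aset)) atTop (𝓝 0) :=
      (hconv Aset hAm).comp (tendsto_add_atTop_nat k₀)
    filter_upwards [htend0.eventually (gt_mem_nhds hgap)] with k hk
    show u k ∈ {S' : AutM X μ | μ ((⇑S'.1 ⁻¹' Aset) ∆ (⇑T'.1 ⁻¹' Aset)) < ε}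
    simp only [Set.mem_setOf_eq]
    have hNmeas : MeasurableSet (((⇑T.1)^[nseq (k + k₀)] ⁻¹' Aset) ∆ Aset) :=
      (hAm.preimage (T.1.measurable.iterate _)).symmDiff hAm
    have hfirst : μ ((⇑(u k).1 ⁻¹' Aset) ∆ (⇑(P m).1 ⁻¹' Aset)) =
        μ (((⇑T.1)^[nseq (k + k₀)] ⁻¹' Aset) ∆ Aset) := by
      have hcomp : ⇑(u k).1 ⁻¹' Aset =
          ⇑(mePow X T.1 m) ⁻¹' ((⇑T.1)^[nseq (k + k₀)] ⁻¹' Aset) := by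
        show ⇑(mePow X T.1 (m + (nseq (k + k₀) : ℤ))) ⁻¹' Aset = _
        rw [coe_mePow_add_nat, Set.preimage_comp]
      rw [hcomp, show ⇑(P m).1 = ⇑(mePow X T.1 m) from rfl, ← Set.preimage_symmDiff]
      exact (mp_mePow T m).measure_preimage hNmeas.nullMeasurableSet
    calc μ ((⇑(u k).1 ⁻¹' Aset) ∆ (⇑T'.1 ⁻¹' Aset))
        ≤ μ ((⇑(u k).1 ⁻¹' Aset) ∆ (⇑(P m).1 ⁻¹' Aset)) + c := measure_symmDiff_le _ _ _
      _ < (ε - c) + c := ENNReal.add_lt_add_right hctop (by rw [hfirst]; exact hk)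
      _ = ε := tsub_add_cancel_of_le hmem.le
  rw [hSP]
  exact mem_closure_of_tendsto hten (Filter.Eventually.of_forall humem)

end Aux4


/-- If every positive power `T^n` of an invertible measure-preserving transformation
`T` of a standard probability space is rank one, and `T` is rigid, then the rank one
transformations in the weak closure `Wcl(T)` contain a dense `G_δ` subset of
`Wcl(T)` (with its subspace weak topology). -/
theorem stmt16 [StandardBorelSpace X] (μ : Measure X) [IsProbabilityMeasure μ]
    (T : AutM X μ)
    (hrank : ∀ n : ℕ, 0 < n → IsRankOneMap X μ ((⇑T.1)^[n]))
    (hrig : IsRigidMap X μ ⇑T.1) :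
    ∃ R : Set (Wcl X μ T), IsGδ R ∧ Dense R ∧
      ∀ S ∈ R, IsRankOneMap X μ ⇑(S : AutM X μ).1 := by
  obtain ⟨A, hAm, hAd⟩ := exists_dense_family μ
  set posPow : Set (AutM X μ) := {S | ∃ p : ℕ, 0 < p ∧ S.1 = mePow X T.1 (p:ℤ)} with hpp
  have hppGk : ∀ k, posPow ⊆ GSet X μ A k := by
    rintro k S ⟨p, hp, hSp⟩
    have hcoe : ⇑S.1 = (⇑T.1)^[p] := by
      rw [hSp]
      show ⇑(mePowNat X T.1 p) = _
      exact coe_mePowNat _ _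
    exact pow_mem_GSet μ A hAm k hcoe (hrank p hp)
  have hppWcl : posPow ⊆ {S : AutM X μ | ∃ m : ℤ, S.1 = mePow X T.1 m} := by
    rintro S ⟨p, _, h⟩
    exact ⟨(p:ℤ), h⟩
  have hWclsub : Wcl X μ T ⊆ closure posPow :=
    closure_minimal (powers_subset_closure_posPow μ T hrig) isClosed_closure
  refine ⟨⋂ k, (Subtype.val ⁻¹' (GSet X μ A k)), ?_, ?_, ?_⟩
  · exact IsGδ.iInter fun k =>
      ((isOpen_GSet X μ A hAm k).preimage continuous_subtype_val).isGδ
  · rw [Topology.IsInducing.subtypeVal.dense_iff]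
    intro x
    refine mem_of_subset_of_mem ?_ (hWclsub x.2)
    refine closure_mono ?_
    intro S hS
    refine ⟨⟨S, subset_closure (hppWcl hS)⟩, ?_, rfl⟩
    exact Set.mem_iInter.2 fun k => hppGk k hS
  · rintro S hS
    exact isRankOne_of_mem_GSet μ A hAd fun k => Set.mem_iInter.1 hS k
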